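/- Let A be an abelian group, n ≥ 1, σ a permutation of {1,…,n}, and a ∈ A an element of finite additive order k. Consider the set S = {x ∈ Aⁿ : x_{σ(j)} = x_j + a for all j}, i.e. the fixed-point set of the map on Aⁿ given by permuting coordinates by σ and adding a. Then S is nonempty if and only if k divides the length of every cycle of σ; and when S is nonempty, S is in bijection with A^c, where c is the number of cycles of σ (counting fixed points as cycles of length 1). -/

import Mathlib

section Aux

variable {A : Type*} [AddCommGroup A] {n : ℕ} (σ : Equiv.Perm (Fin n)) (a : A)

/-- Shift lemma: a solution shifts by `m • a` along the orbit. -/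
lemma stmt11_shift {x : Fin n → A} (hx : ∀ j, x (σ j) = x j + a) (m : ℤ) (j : Fin n) :
    x ((σ ^ m) j) = x j + m • a := by
  induction m using Int.induction_on with
  | zero => simp
  | succ m ih =>
      have h1 : (σ ^ ((m : ℤ) + 1)) j = σ ((σ ^ (m : ℤ)) j) := by
        rw [add_comm, zpow_add, zpow_one, Equiv.Perm.mul_apply]
      rw [h1, hx, ih, add_zsmul, one_zsmul, add_assoc]
  | pred m ih =>
      have h1 : σ ((σ ^ (-(m : ℤ) - 1)) j) = (σ ^ (-(m : ℤ))) j := by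
        rw [← Equiv.Perm.mul_apply, ← zpow_one_add]
        ring_nf
      have h3 := hx ((σ ^ (-(m : ℤ) - 1)) j)
      rw [h1, ih] at h3
      have h2 : x ((σ ^ (-(m : ℤ) - 1)) j) = x j + (-(m : ℤ)) • a - a := by
        rw [eq_sub_iff_add_eq, ← h3]
      rw [h2, sub_zsmul, one_zsmul]; abel

lemma stmt11_zpow_iff {m : ℤ} {j : Fin n} :
    (σ ^ m) j = j ↔ (Function.minimalPeriod ⇑σ j : ℤ) ∣ m := by
  have h := MulAction.zpow_smul_eq_iff_minimalPeriod_dvd (α := Fin n) (a := σ) (b := j) (n := m)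
  simpa [Equiv.Perm.smul_def] using h

end Aux

/-- Let `A` be an abelian group, `n ≥ 1`, `σ` a permutation of `{1,…,n}`,
and `a ∈ A` of finite additive order `k`.  The fixed-point set
`S = {x ∈ Aⁿ : x_{σ j} = x_j + a for all j}` is nonempty iff `k` divides the length of every
cycle of `σ` (the cycle length of `j` being the minimal period of `σ` at `j`, fixed points
counting as cycles of length 1); and when `S` is nonempty it is in bijection with `A^c`,
`c` being the number of cycles, i.e. of orbits of `⟨σ⟩` on `{1,…,n}`. -/
theorem stmt_11 {A : Type*} [AddCommGroup A] (n : ℕ) (hn : 1 ≤ n)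
    (σ : Equiv.Perm (Fin n)) (a : A) (ha : 0 < addOrderOf a) :
    ({x : Fin n → A | ∀ j, x (σ j) = x j + a}.Nonempty ↔
      ∀ j : Fin n, addOrderOf a ∣ Function.minimalPeriod ⇑σ j) ∧
    ({x : Fin n → A | ∀ j, x (σ j) = x j + a}.Nonempty →
      Nonempty (({x : Fin n → A | ∀ j, x (σ j) = x j + a} : Set (Fin n → A)) ≃
        (MulAction.orbitRel.Quotient (Subgroup.zpowers σ) (Fin n) → A))) := by
  classical
  set Q := MulAction.orbitRel.Quotient (Subgroup.zpowers σ) (Fin n) with hQ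
  set mk : Fin n → Q := Quotient.mk (MulAction.orbitRel (Subgroup.zpowers σ) (Fin n)) with hmk
  -- for each j, an integer d with (σ ^ d) ((mk j).out) = j
  have hrep : ∀ j : Fin n, ∃ d : ℤ, (σ ^ d) ((mk j).out) = j := by
    intro j
    have h : (mk j).out ∈ MulAction.orbit (Subgroup.zpowers σ) j := by
      have := Quotient.mk_out (s := MulAction.orbitRel (Subgroup.zpowers σ) (Fin n)) j
      exact this
    obtain ⟨⟨g, hg⟩, hgj⟩ := h
    obtain ⟨d, rfl⟩ := Subgroup.mem_zpowers_iff.mp hg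
    refine ⟨-d, ?_⟩
    rw [← hgj]
    show (σ ^ (-d)) ((σ ^ d) j) = j
    rw [← Equiv.Perm.mul_apply, ← zpow_add]
    simp
  choose dep hdep using hrep
  have hmkσ : ∀ j : Fin n, mk (σ j) = mk j := by
    intro j
    exact Quotient.sound ⟨⟨σ, Subgroup.mem_zpowers σ⟩, rfl⟩
  -- forward direction
  have fwd : ({x : Fin n → A | ∀ j, x (σ j) = x j + a}.Nonempty →
      ∀ j : Fin n, addOrderOf a ∣ Function.minimalPeriod ⇑σ j) := by
    rintro ⟨x, hx⟩ j
    set p := Function.minimalPeriod ⇑σ j with hp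
    have hper : (σ ^ (p : ℤ)) j = j := (stmt11_zpow_iff σ).mpr dvd_rfl
    have h1 := stmt11_shift σ a hx (p : ℤ) j
    rw [hper] at h1
    have hza : (p : ℤ) • a = 0 := by
      have h2 := h1.symm
      rwa [add_eq_left] at h2
    have := addOrderOf_dvd_iff_zsmul_eq_zero.mpr hza
    exact_mod_cast this
  -- backward direction: construct a solution
  have bwd : (∀ j : Fin n, addOrderOf a ∣ Function.minimalPeriod ⇑σ j) →
      ({x : Fin n → A | ∀ j, x (σ j) = x j + a}.Nonempty) := by
    intro h
    refine ⟨fun j => dep j • a, fun j => ?_⟩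
    have hr : mk (σ j) = mk j := hmkσ j
    have h1 : (σ ^ dep (σ j)) ((mk j).out) = σ j := by
      have := hdep (σ j); rwa [hr] at this
    have h2 : (σ ^ (dep j + 1)) ((mk j).out) = σ j := by
      rw [add_comm, zpow_add, zpow_one, Equiv.Perm.mul_apply, hdep j]
    have h3 : (σ ^ (dep (σ j) - (dep j + 1))) ((mk j).out) = (mk j).out := by
      have he : σ ^ (dep (σ j) - (dep j + 1))
          = σ ^ (-(dep j + 1)) * σ ^ (dep (σ j)) := by
        rw [← zpow_add]; ring_nf
      rw [he, Equiv.Perm.mul_apply, h1, ← h2, ← Equiv.Perm.mul_apply, ← zpow_add]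
      have h0 : (-(dep j + 1) + (dep j + 1) : ℤ) = 0 := by ring
      rw [h0, zpow_zero]
      rfl
    have hdvd : (addOrderOf a : ℤ) ∣ dep (σ j) - (dep j + 1) :=
      dvd_trans (Int.natCast_dvd_natCast.mpr (h _)) ((stmt11_zpow_iff σ).mp h3)
    have hz : (dep (σ j) - (dep j + 1)) • a = 0 := addOrderOf_dvd_iff_zsmul_eq_zero.mp hdvd
    show dep (σ j) • a = dep j • a + a
    have h4 : dep (σ j) • a = (dep j + 1) • a + (dep (σ j) - (dep j + 1)) • a := by
      rw [← add_zsmul]; ring_nf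
    rw [h4, hz, add_zero, add_zsmul, one_zsmul]
  refine ⟨⟨fwd, bwd⟩, ?_⟩
  -- bijection
  rintro ⟨x₀, hx₀⟩
  refine ⟨{
    toFun := fun x => fun q => x.1 q.out - x₀ q.out
    invFun := fun y => ⟨fun j => x₀ j + y (mk j), fun j => by
      show x₀ (σ j) + y (mk (σ j)) = (x₀ j + y (mk j)) + a
      rw [hmkσ j, hx₀ j]; abel⟩
    left_inv := by
      rintro ⟨x, hx⟩
      ext j
      show x₀ j + (x (mk j).out - x₀ (mk j).out) = x j
      have h1 := stmt11_shift σ a hx (dep j) ((mk j).out)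
      have h2 := stmt11_shift σ a hx₀ (dep j) ((mk j).out)
      rw [hdep j] at h1 h2
      rw [h1, h2]; abel
    right_inv := by
      intro y
      ext q
      show x₀ q.out + y (mk q.out) - x₀ q.out = y q
      have hq : mk q.out = q := Quotient.out_eq q
      rw [hq]; abel }⟩
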